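/- arXiv:2310.00419 — 4 statements merged into one kernel-verified Lean document; each statement's English description precedes it below -/
import Mathlib

section
/- (Theorem 1, continuous-time PI consensus.) There exist ᾱ > 0 and 0 < β₁ < β₂ < ∞ such that for every α ∈ (0, ᾱ) and every β ∈ (β₁, β₂), the following holds: for every pair of differentiable trajectories x, v : [0,∞) → (ℝ^d)^m satisfying, for all t ≥ 0, ẋ(t) = −K( L̃ x(t) − β L̃ v(t) + α ∇F(x(t)) ) and v̇(t) = −β K L̃ x(t), with arbitrary initial condition (x(0), v(0)), there exist constants C, c > 0 such that ‖x_i(t) − x*‖ ≤ C e^{−c t} for every agent i ∈ {1,…,m} and all t ≥ 0; i.e., each local estimate x_i(t) converges exponentially to the same minimizer x*. -/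
set_option maxHeartbeats 4000000


open scoped RealInnerProductSpace

/-- The stacked state space `(ℝ^d)^m` with the Euclidean (ℓ²-product) structure. -/
abbrev Stack (d m : ℕ) : Type := PiLp 2 (fun _ : Fin m => EuclideanSpace ℝ (Fin d))

/-- Action of `L̃ = L ⊗ I_d` on stacked vectors: `(L̃ x)_i = ∑_j L_{ij} x_j`. -/
noncomputable def lapAct {d m : ℕ} (L : Matrix (Fin m) (Fin m) ℝ) (x : Stack d m) :
    Stack d m := WithLp.toLp 2 (fun i => ∑ j, L i j • x j)

/-- Action of the block-diagonal pre-conditioner `K = Diag(K_1,…,K_m)`: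
`(K x)_i = K_i x_i`. -/
noncomputable def preAct {d m : ℕ} (Ki : Fin m → Matrix (Fin d) (Fin d) ℝ)
    (x : Stack d m) : Stack d m := WithLp.toLp 2 (fun i => WithLp.toLp 2 ((Ki i).mulVec (x i)))

/-- Gradient of the cumulative cost `F(x) = ∑_i f_i(x_i)`: the stacked vector
`(∇f_1(x_1),…,∇f_m(x_m))`. -/
noncomputable def gradCumulative {d m : ℕ}
    (f : Fin m → EuclideanSpace ℝ (Fin d) → ℝ) (x : Stack d m) : Stack d m :=
  WithLp.toLp 2 (fun i => gradient (f i) (x i))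


section Aux
variable {E : Type*} [NormedAddCommGroup E] [InnerProductSpace ℝ E]

/-- PSD operator: vanishing quadratic form implies vanishing image. -/
lemma psd_apply_eq_zero (T : E →L[ℝ] E) (hsymm : ∀ u w : E, ⟪T u, w⟫ = ⟪u, T w⟫)
    (hpsd : ∀ u : E, 0 ≤ ⟪T u, u⟫) {y : E} (hy : ⟪T y, y⟫ = 0) : T y = 0 := by
  have key : ∀ w : E, ⟪T y, w⟫ = 0 := by
    intro w
    by_contra hne
    set a := ⟪T y, w⟫ with ha
    set b := ⟪T w, w⟫ with hb
    have hb0 : 0 ≤ b := hpsd w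
    set c : ℝ := -a / (b + 1) with hc
    have h1 : 0 ≤ ⟪T (y + c • w), y + c • w⟫ := hpsd _
    have h2 : ⟪T w, y⟫ = a := by rw [hsymm w y, real_inner_comm]
    have e1 : T (y + c • w) = T y + c • T w := by rw [map_add, map_smul]
    rw [e1, inner_add_left, inner_add_right, inner_add_right, real_inner_smul_left,
      real_inner_smul_right, real_inner_smul_left, real_inner_smul_right, hy, ← ha, h2, ← hb]
      at h1
    have hbpos : 0 < b + 1 := by linarith
    have hcval : 0 + c * a + (c * a + c * (c * b)) = a ^ 2 * (-b - 2) / (b + 1) ^ 2 := by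
      rw [hc]; field_simp; ring
    rw [hcval] at h1
    have ha2 : 0 < a ^ 2 := by positivity
    have : a ^ 2 * (-b - 2) / (b + 1) ^ 2 < 0 :=
      div_neg_of_neg_of_pos (by nlinarith) (by positivity)
    linarith
  exact inner_self_eq_zero.mp (key (T y))

/-- Positive definite quadratic form on a submodule of a finite-dimensional space is
uniformly bounded below on the unit sphere. -/
lemma posdef_quadratic_bound [FiniteDimensional ℝ E] (T : E →L[ℝ] E) (S : Submodule ℝ E)
    (hpos : ∀ y ∈ S, y ≠ 0 → 0 < ⟪T y, y⟫) :
    ∃ c > (0:ℝ), ∀ y ∈ S, c * ‖y‖ ^ 2 ≤ ⟪T y, y⟫ := by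
  set sph : Set E := (S : Set E) ∩ Metric.sphere 0 1 with hsph
  by_cases hne : sph.Nonempty
  · have hcomp : IsCompact sph := by
      have h1 : IsCompact (Metric.sphere (0:E) 1) := isCompact_sphere 0 1
      exact h1.of_isClosed_subset
        (S.closed_of_finiteDimensional.inter Metric.isClosed_sphere) Set.inter_subset_right
    have hcont : ContinuousOn (fun y : E => ⟪T y, y⟫) sph :=
      (T.continuous.inner continuous_id).continuousOn
    obtain ⟨y0, hy0mem, hy0min⟩ := hcomp.exists_isMinOn hne hcont
    have hy0norm : ‖y0‖ = 1 := by
      have := hy0mem.2; simpa using this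
    have hy0S : y0 ∈ S := hy0mem.1
    have hy0ne : y0 ≠ 0 := fun h => by simp [h] at hy0norm
    refine ⟨⟪T y0, y0⟫, hpos y0 hy0S hy0ne, ?_⟩
    intro y hyS
    rcases eq_or_ne y 0 with rfl | hyne
    · simp
    · have hny : (0:ℝ) < ‖y‖ := norm_pos_iff.mpr hyne
      set u : E := ‖y‖⁻¹ • y with hu
      have huS : u ∈ S := S.smul_mem _ hyS
      have hunorm : ‖u‖ = 1 := by
        rw [hu, norm_smul, norm_inv, norm_norm, inv_mul_cancel₀ hny.ne']
      have humem : u ∈ sph := ⟨huS, by simpa using hunorm⟩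
      have hmin := hy0min humem
      have hexp : ⟪T u, u⟫ = ‖y‖⁻¹ ^ 2 * ⟪T y, y⟫ := by
        rw [hu, map_smul, real_inner_smul_left, real_inner_smul_right]; ring
      have : ⟪T y0, y0⟫ ≤ ‖y‖⁻¹ ^ 2 * ⟪T y, y⟫ := by rw [← hexp]; exact hmin
      calc ⟪T y0, y0⟫ * ‖y‖ ^ 2 ≤ (‖y‖⁻¹ ^ 2 * ⟪T y, y⟫) * ‖y‖ ^ 2 := by
            apply mul_le_mul_of_nonneg_right this (by positivity)
        _ = ⟪T y, y⟫ := by field_simp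
  · refine ⟨1, one_pos, ?_⟩
    intro y hyS
    rcases eq_or_ne y 0 with rfl | hyne
    · simp
    · exfalso
      apply hne
      have hny : (0:ℝ) < ‖y‖ := norm_pos_iff.mpr hyne
      refine ⟨‖y‖⁻¹ • y, S.smul_mem _ hyS, ?_⟩
      simp [norm_smul, inv_mul_cancel₀ hny.ne']

/-- Scalar Grönwall-type lemma: `W' ≤ -γ W` on `[0,∞)` gives exponential decay. -/
lemma exp_decay_of_hasDerivAt {W D : ℝ → ℝ} {γ : ℝ}
    (hd : ∀ t ≥ (0:ℝ), HasDerivAt W (D t) t) (hle : ∀ t ≥ (0:ℝ), D t ≤ -γ * W t) :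
    ∀ t ≥ (0:ℝ), W t ≤ W 0 * Real.exp (-γ * t) := by
  intro t ht
  set g : ℝ → ℝ := fun s => W s * Real.exp (γ * s) with hg
  have hgd : ∀ s ≥ (0:ℝ), HasDerivAt g (D s * Real.exp (γ * s) + W s * (γ * Real.exp (γ * s))) s := by
    intro s hs
    have he : HasDerivAt (fun s : ℝ => Real.exp (γ * s)) (γ * Real.exp (γ * s)) s := by
      have := (Real.hasDerivAt_exp (γ * s)).comp s ((hasDerivAt_id s).const_mul γ)
      simp [mul_comm] at this; exact this
    exact (hd s hs).mul he
  have hanti : AntitoneOn g (Set.Ici (0:ℝ)) := by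
    apply antitoneOn_of_deriv_nonpos (convex_Ici 0)
    · intro s hs
      exact ((hgd s hs).continuousAt).continuousWithinAt
    · intro s hs
      rw [interior_Ici] at hs
      exact ((hgd s (le_of_lt hs)).differentiableAt).differentiableWithinAt
    · intro s hs
      rw [interior_Ici] at hs
      rw [(hgd s (le_of_lt hs)).deriv]
      have h1 := hle s (le_of_lt hs)
      have h2 : (0:ℝ) < Real.exp (γ * s) := Real.exp_pos _
      nlinarith
  have h0 : g t ≤ g 0 := hanti (Set.self_mem_Ici) ht ht
  have : W t * Real.exp (γ * t) ≤ W 0 := by simpa [hg] using h0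
  have hepos : (0:ℝ) < Real.exp (γ * t) := Real.exp_pos _
  rw [show -γ * t = -(γ * t) by ring, Real.exp_neg]
  calc W t = (W t * Real.exp (γ * t)) * (Real.exp (γ * t))⁻¹ := by field_simp
    _ ≤ W 0 * (Real.exp (γ * t))⁻¹ := by
        apply mul_le_mul_of_nonneg_right this (by positivity)

/-- Zero derivative on `[0,∞)` implies constancy. -/
lemma const_of_deriv_zero {F : Type*} [NormedAddCommGroup F] [NormedSpace ℝ F]
    {ζ : ℝ → F} (hd : ∀ t ≥ (0:ℝ), HasDerivAt ζ 0 t) : ∀ t ≥ (0:ℝ), ζ t = ζ 0 := by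
  intro t ht
  have := constant_of_has_deriv_right_zero (f := ζ) (a := 0) (b := t)
    (fun s hs => ((hd s hs.1).continuousAt).continuousWithinAt)
    (fun s hs => ((hd s hs.1).hasDerivWithinAt))
  exact this t ⟨ht, le_refl t⟩

end Aux

section StackAux

variable {d m : ℕ}

lemma euc_inner (a b : EuclideanSpace ℝ (Fin d)) : ⟪a, b⟫ = ∑ k, a k * b k := by
  simp [PiLp.inner_apply, RCLike.inner_apply, conj_trivial]
  exact Finset.sum_congr rfl fun _ _ => mul_comm _ _

lemma lapAct_apply (L : Matrix (Fin m) (Fin m) ℝ) (x : Stack d m) (i : Fin m) :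
    lapAct L x i = ∑ j, L i j • x j := rfl

noncomputable def lapActL (d m : ℕ) (L : Matrix (Fin m) (Fin m) ℝ) :
    Stack d m →ₗ[ℝ] Stack d m where
  toFun := lapAct L
  map_add' x y := by
    refine PiLp.ext fun i => ?_
    simp only [lapAct_apply]
    rw [show ((x + y : Stack d m)) = fun j => x j + y j from rfl]
    simp [smul_add, Finset.sum_add_distrib]
    rfl
  map_smul' c x := by
    refine PiLp.ext fun i => ?_
    simp only [lapAct_apply, RingHom.id_apply]
    rw [show ((c • x : Stack d m)) = fun j => c • x j from rfl]
    rw [show ((c • lapAct L x : Stack d m) i) = c • ∑ j, L i j • x j from rfl]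
    rw [Finset.smul_sum]
    congr 1; funext j
    rw [smul_comm]

noncomputable def preActL (d m : ℕ) (Ki : Fin m → Matrix (Fin d) (Fin d) ℝ) :
    Stack d m →ₗ[ℝ] Stack d m where
  toFun := preAct Ki
  map_add' x y := by
    refine PiLp.ext fun i => ?_
    show WithLp.toLp 2 ((Ki i).mulVec ((x i).ofLp + (y i).ofLp)) = WithLp.toLp 2 ((Ki i).mulVec (x i).ofLp + (Ki i).mulVec (y i).ofLp)
    rw [Matrix.mulVec_add]
  map_smul' c x := by
    refine PiLp.ext fun i => ?_
    show WithLp.toLp 2 ((Ki i).mulVec (c • (x i).ofLp)) = WithLp.toLp 2 (c • (Ki i).mulVec (x i).ofLp)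
    rw [Matrix.mulVec_smul]

lemma lapAct_inner (L : Matrix (Fin m) (Fin m) ℝ) (x y : Stack d m) :
    ⟪(lapAct L x : Stack d m), y⟫ = ∑ i, ∑ j, L i j * ⟪x j, y i⟫ := by
  rw [PiLp.inner_apply]
  refine Finset.sum_congr rfl fun i _ => ?_
  rw [lapAct_apply, sum_inner]
  refine Finset.sum_congr rfl fun j _ => ?_
  rw [real_inner_smul_left]

lemma inner_lapAct (L : Matrix (Fin m) (Fin m) ℝ) (x y : Stack d m) :
    ⟪x, (lapAct L y : Stack d m)⟫ = ∑ i, ∑ j, L i j * ⟪x i, y j⟫ := by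
  rw [PiLp.inner_apply]
  refine Finset.sum_congr rfl fun i _ => ?_
  rw [lapAct_apply, inner_sum]
  refine Finset.sum_congr rfl fun j _ => ?_
  rw [real_inner_smul_right]

lemma lapAct_symm {L : Matrix (Fin m) (Fin m) ℝ} (hL : L.IsSymm) (x y : Stack d m) :
    ⟪(lapAct L x : Stack d m), y⟫ = ⟪x, (lapAct L y : Stack d m)⟫ := by
  rw [lapAct_inner, inner_lapAct, Finset.sum_comm]
  refine Finset.sum_congr rfl fun i _ => Finset.sum_congr rfl fun j _ => ?_
  rw [hL.apply, real_inner_comm]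

end StackAux

open Matrix in
lemma matrix_psd_quad_nonneg {n : ℕ} {M : Matrix (Fin n) (Fin n) ℝ} (hM : M.PosSemidef)
    (v : Fin n → ℝ) : 0 ≤ ∑ a, ∑ b, M a b * v b * v a := by
  have h := hM.re_dotProduct_nonneg v
  simp only [star_trivial, dotProduct, mulVec, RCLike.re_to_real] at h
  have h2 : ∑ a, v a * ∑ b, M a b * v b = ∑ a, ∑ b, M a b * v b * v a := by
    refine Finset.sum_congr rfl fun a _ => ?_
    rw [Finset.mul_sum]
    exact Finset.sum_congr rfl fun b _ => by ring
  rw [h2] at h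
  exact h

section StackAux2

variable {d m : ℕ}

lemma euc_sum_apply {ι : Type*} (s : Finset ι) (g : ι → EuclideanSpace ℝ (Fin d)) (k : Fin d) :
    (∑ j ∈ s, g j) k = ∑ j ∈ s, g j k := by
  classical
  induction s using Finset.cons_induction with
  | empty => rfl
  | cons a s ha ih => rw [Finset.sum_cons, Finset.sum_cons, ← ih]; rfl

variable (G : SimpleGraph (Fin m)) [DecidableRel G.Adj]

lemma lapAct_quad_nonneg (x : Stack d m) :
    0 ≤ ⟪(lapAct (G.lapMatrix ℝ) x : Stack d m), x⟫ := by
  rw [lapAct_inner]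
  have hexp : ∑ i, ∑ j, G.lapMatrix ℝ i j * ⟪x j, x i⟫
      = ∑ k : Fin d, ∑ i, ∑ j, G.lapMatrix ℝ i j * x j k * x i k := by
    have e1 : ∀ i j : Fin m, G.lapMatrix ℝ i j * ⟪x j, x i⟫
        = ∑ k, G.lapMatrix ℝ i j * x j k * x i k := by
      intro i j; rw [euc_inner, Finset.mul_sum]
      exact Finset.sum_congr rfl fun k _ => by ring
    simp only [e1]
    calc ∑ i, ∑ j, ∑ k, G.lapMatrix ℝ i j * x j k * x i k
        = ∑ i, ∑ k, ∑ j, G.lapMatrix ℝ i j * x j k * x i k :=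
          Finset.sum_congr rfl fun i _ => Finset.sum_comm
      _ = ∑ k, ∑ i, ∑ j, G.lapMatrix ℝ i j * x j k * x i k := Finset.sum_comm
  rw [hexp]
  exact Finset.sum_nonneg fun k _ =>
    matrix_psd_quad_nonneg (SimpleGraph.posSemidef_lapMatrix ℝ G) (fun i => x i k)

lemma lapAct_ker_const (hG : G.Connected) {w : Stack d m}
    (hw : lapAct (G.lapMatrix ℝ) w = 0) : ∀ i j, w i = w j := by
  intro i j
  refine PiLp.ext fun k => ?_
  have hcol : Matrix.toLin' (G.lapMatrix ℝ) (fun i => w i k) = 0 := by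
    rw [Matrix.toLin'_apply]
    funext i'
    show ∑ j, G.lapMatrix ℝ i' j * w j k = 0
    have h2 : (lapAct (G.lapMatrix ℝ) w i') k = 0 := by rw [hw]; rfl
    rw [lapAct_apply, euc_sum_apply] at h2
    simpa using h2
  exact (SimpleGraph.lapMatrix_mulVec_eq_zero_iff_forall_reachable G).mp
    (by rwa [Matrix.toLin'_apply] at hcol) i j (hG.preconnected i j)

lemma lapAct_const_eq_zero (c : EuclideanSpace ℝ (Fin d)) :
    lapAct (G.lapMatrix ℝ) (WithLp.toLp 2 (fun _ => c) : Stack d m) = 0 := by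
  refine PiLp.ext fun i => ?_
  rw [show (lapAct (G.lapMatrix ℝ) (WithLp.toLp 2 (fun _ => c) : Stack d m)) i = ∑ j, G.lapMatrix ℝ i j • c
    from rfl, ← Finset.sum_smul]
  have : ∑ j, G.lapMatrix ℝ i j = 0 := by
    have h := congrFun (SimpleGraph.lapMatrix_mulVec_const_eq_zero (R := ℝ) G) i
    simpa [Matrix.mulVec, dotProduct] using h
  rw [this, zero_smul]
  rfl

end StackAux2

section StackAux3

variable {d m : ℕ} {Ki : Fin m → Matrix (Fin d) (Fin d) ℝ}

lemma preAct_coord (Ki : Fin m → Matrix (Fin d) (Fin d) ℝ) (x : Stack d m) (i : Fin m)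
    (a : Fin d) : preAct Ki x i a = ∑ b, Ki i a b * x i b := rfl

lemma preAct_inner_symm (hKi : ∀ i, (Ki i).PosDef) (x y : Stack d m) :
    ⟪(preAct Ki x : Stack d m), y⟫ = ⟪x, (preAct Ki y : Stack d m)⟫ := by
  rw [PiLp.inner_apply, PiLp.inner_apply]
  refine Finset.sum_congr rfl fun i _ => ?_
  have hsym : ∀ a b, Ki i a b = Ki i b a := by
    intro a b
    have h := congrFun (congrFun (hKi i).1 b) a
    simpa [Matrix.conjTranspose_apply] using h
  rw [euc_inner, euc_inner]
  simp only [preAct_coord, Finset.sum_mul, Finset.mul_sum]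
  rw [Finset.sum_comm]
  refine Finset.sum_congr rfl fun a _ => Finset.sum_congr rfl fun b _ => ?_
  rw [hsym a b]; ring

lemma preAct_quad_pos (hKi : ∀ i, (Ki i).PosDef) {x : Stack d m} (hx : x ≠ 0) :
    0 < ⟪(preAct Ki x : Stack d m), x⟫ := by
  rw [PiLp.inner_apply]
  have hex : ∃ i, x i ≠ 0 := by
    by_contra h
    push_neg at h
    exact hx (PiLp.ext h)
  obtain ⟨i0, hi0⟩ := hex
  have hquad : ∀ i, ⟪(preAct Ki x i), x i⟫ = ∑ a, ∑ b, Ki i a b * x i b * x i a := by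
    intro i
    rw [euc_inner]
    simp only [preAct_coord, Finset.sum_mul]
  apply Finset.sum_pos'
  · intro i _
    rw [hquad]
    exact matrix_psd_quad_nonneg (hKi i).posSemidef (x i)
  · refine ⟨i0, Finset.mem_univ _, ?_⟩
    rw [hquad]
    have h := (hKi i0).dotProduct_mulVec_pos (x := (x i0).ofLp) (fun h0 => hi0 (WithLp.ofLp_injective 2 h0))
    simp only [star_trivial, dotProduct, Matrix.mulVec] at h
    have h2 : ∑ a, x i0 a * ∑ b, Ki i0 a b * x i0 b
        = ∑ a, ∑ b, Ki i0 a b * x i0 b * x i0 a := by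
      refine Finset.sum_congr rfl fun a _ => ?_
      rw [Finset.mul_sum]
      exact Finset.sum_congr rfl fun b _ => by ring
    rw [h2] at h
    exact h

lemma preAct_inv_comp (hKi : ∀ i, (Ki i).PosDef) (x : Stack d m) :
    preAct (fun i => (Ki i)⁻¹) (preAct Ki x) = x := by
  refine PiLp.ext fun i => ?_
  show WithLp.toLp 2 ((Ki i)⁻¹.mulVec ((Ki i).mulVec (x i).ofLp)) = x i
  rw [Matrix.mulVec_mulVec, Matrix.nonsing_inv_mul _ (hKi i).det_pos.ne'.isUnit,
    Matrix.one_mulVec, WithLp.toLp_ofLp]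

lemma preAct_comp_inv (hKi : ∀ i, (Ki i).PosDef) (x : Stack d m) :
    preAct Ki (preAct (fun i => (Ki i)⁻¹) x) = x := by
  refine PiLp.ext fun i => ?_
  show WithLp.toLp 2 ((Ki i).mulVec ((Ki i)⁻¹.mulVec (x i).ofLp)) = x i
  rw [Matrix.mulVec_mulVec, Matrix.mul_nonsing_inv _ (hKi i).det_pos.ne'.isUnit,
    Matrix.one_mulVec, WithLp.toLp_ofLp]

end StackAux3

/-- Pure scalar arithmetic core of the Lyapunov decay estimate. -/
lemma lyap_arith
    (α β μ Lf lam2 kmin qmin CK CQ CΛ ε M1 ρ Amax γ s r : ℝ)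
    (X1 X2 X3 X4 X5 QA KB AB W DW : ℝ)
    (hα : 0 < α) (hμ : 0 < μ) (hLf : 0 < Lf) (hβ : 1 < β)
    (hlam2 : 0 < lam2) (hkmin : 0 < kmin) (hqmin : 0 < qmin)
    (hCK0 : 0 ≤ CK) (hCQ0 : 0 ≤ CQ) (hCΛ0 : 0 ≤ CΛ)
    (hM1 : M1 = CK * (CΛ + α * Lf)) (hρ : ρ = ε*β*lam2*kmin^2)
    (hAmax : Amax = CQ + CK + ε) (hγ : γ = min (α*μ) ρ / Amax)
    (hε0 : 0 < ε) (hεβ : ε*β ≤ 1) (hε3 : ε * (M1+1)^2 ≤ α*μ*β*lam2*kmin^2)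
    (hs0 : 0 ≤ s) (hr0 : 0 ≤ r)
    (hDW : DW = (-2 + 2*ε*β) * X1 - 2*α*X2 + 2*ε*X3 - 2*ε*β*X4 + 2*ε*α*X5)
    (hW : W = QA + KB - (2*ε) * AB)
    (F1 : μ * s^2 ≤ X2) (F3 : 0 ≤ X1) (F4 : lam2 * (kmin^2 * r^2) ≤ X4)
    (F5 : |X3| ≤ CK * CΛ * (s*r)) (F6 : |X5| ≤ CK * Lf * (s*r)) (F7 : |AB| ≤ s*r)
    (F8 : QA ≤ CQ * s^2) (F9 : KB ≤ CK * r^2) :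
    DW ≤ -γ * W := by
  have hβ0 : 0 < β := lt_trans one_pos hβ
  have hM10 : 0 ≤ M1 := by
    rw [hM1]; exact mul_nonneg hCK0 (add_nonneg hCΛ0 (mul_nonneg hα.le hLf.le))
  have hρ0 : 0 < ρ := by rw [hρ]; positivity
  have hAmax0 : 0 < Amax := by rw [hAmax]; linarith
  have hγ0 : 0 < γ := by
    rw [hγ]; exact div_pos (lt_min (by positivity) hρ0) hAmax0
  have hsr2 : 2*(s*r) ≤ s^2 + r^2 := by nlinarith [sq_nonneg (s - r)]
  have hW_ub : W ≤ Amax * (s^2 + r^2) := by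
    rw [hW, hAmax]
    have h1 : -AB ≤ s*r := (neg_le_abs AB).trans F7
    have h2 : ε*(-AB) ≤ ε*(s*r) := mul_le_mul_of_nonneg_left h1 hε0.le
    have h4 : ε*(2*(s*r)) ≤ ε*(s^2+r^2) := mul_le_mul_of_nonneg_left hsr2 hε0.le
    have h5 : 0 ≤ CQ * r^2 := mul_nonneg hCQ0 (sq_nonneg r)
    have h6 : 0 ≤ CK * s^2 := mul_nonneg hCK0 (sq_nonneg s)
    nlinarith [h2, h4, h5, h6, F8, F9]
  have hstep2 : γ * W ≤ α*μ*s^2 + ρ*r^2 := by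
    have h1 : γ * W ≤ γ * (Amax * (s^2+r^2)) := mul_le_mul_of_nonneg_left hW_ub hγ0.le
    have h2 : γ * (Amax * (s^2+r^2)) = min (α*μ) ρ * (s^2+r^2) := by
      have hne : Amax ≠ 0 := hAmax0.ne'
      rw [hγ]
      field_simp
    have e1 : min (α*μ) ρ * s^2 ≤ α*μ*s^2 :=
      mul_le_mul_of_nonneg_right (min_le_left _ _) (sq_nonneg s)
    have e2 : min (α*μ) ρ * r^2 ≤ ρ*r^2 :=
      mul_le_mul_of_nonneg_right (min_le_right _ _) (sq_nonneg r)
    have h3 : min (α*μ) ρ * (s^2+r^2) ≤ α*μ*s^2 + ρ*r^2 := by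
      have hexp : min (α*μ) ρ * (s^2+r^2) = min (α*μ) ρ * s^2 + min (α*μ) ρ * r^2 := by ring
      linarith
    linarith
  have hstep1 : DW ≤ -(2*(α*μ))*s^2 - 2*ρ*r^2 + 2*ε*M1*(s*r) := by
    rw [hDW]
    have t1 : (-2 + 2*ε*β) * X1 ≤ 0 :=
      mul_nonpos_of_nonpos_of_nonneg (by linarith) F3
    have t2 : -(2*α)*X2 ≤ -(2*α)*(μ*s^2) :=
      mul_le_mul_of_nonpos_left F1 (by linarith)
    have t3 : 2*ε*X3 ≤ 2*ε*(CK*CΛ*(s*r)) :=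
      mul_le_mul_of_nonneg_left ((le_abs_self X3).trans F5) (by linarith)
    have t4 : -(2*ε*β)*X4 ≤ -(2*ε*β)*(lam2*(kmin^2*r^2)) := by
      have hp : 0 < 2*ε*β := by positivity
      exact mul_le_mul_of_nonpos_left F4 (by linarith)
    have t5 : 2*ε*α*X5 ≤ 2*ε*α*(CK*Lf*(s*r)) := by
      have hp : 0 ≤ 2*ε*α := by positivity
      exact mul_le_mul_of_nonneg_left ((le_abs_self X5).trans F6) hp
    have hM1exp : 2*ε*(CK*CΛ*(s*r)) + 2*ε*α*(CK*Lf*(s*r)) = 2*ε*M1*(s*r) := by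
      rw [hM1]; ring
    have hρexp : -(2*ε*β)*(lam2*(kmin^2*r^2)) = -(2*ρ*r^2) := by rw [hρ]; ring
    linarith [t1, t2, t3, t4, t5]
  have hstep3 : 2*ε*M1*(s*r) ≤ α*μ*s^2 + ρ*r^2 := by
    have key0 : ε^2 * M1^2 ≤ (α*μ) * ρ := by
      have h0 : M1^2 ≤ (M1+1)^2 := by nlinarith [hM10]
      have h1 : ε*M1^2 ≤ ε*(M1+1)^2 := mul_le_mul_of_nonneg_left h0 hε0.le
      have h3 : ε*(ε*M1^2) ≤ ε*(α*μ*β*lam2*kmin^2) :=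
        mul_le_mul_of_nonneg_left (h1.trans hε3) hε0.le
      calc ε^2*M1^2 = ε*(ε*M1^2) := by ring
        _ ≤ ε*(α*μ*β*lam2*kmin^2) := h3
        _ = (α*μ)*ρ := by rw [hρ]; ring
    have hexp : ρ*(α*μ*s^2 + ρ*r^2 - 2*ε*M1*(s*r))
        = (ε*M1*s - ρ*r)^2 + ((α*μ)*ρ - ε^2*M1^2) * s^2 := by ring
    have hge : 0 ≤ ρ*(α*μ*s^2 + ρ*r^2 - 2*ε*M1*(s*r)) := by
      rw [hexp]
      have q1 := sq_nonneg (ε*M1*s - ρ*r)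
      have q2 : 0 ≤ ((α*μ)*ρ - ε^2*M1^2) * s^2 :=
        mul_nonneg (sub_nonneg.mpr key0) (sq_nonneg s)
      linarith
    have := (mul_nonneg_iff_of_pos_left hρ0).mp hge
    linarith
  linarith

/-- Pure scalar arithmetic core of the Lyapunov lower bound. -/
lemma wlb_arith (ε kmin qmin s r QA KB AB W : ℝ)
    (hW : W = QA + KB - (2*ε)*AB) (h1 : qmin*s^2 ≤ QA) (h2 : kmin*r^2 ≤ KB)
    (F7 : |AB| ≤ s*r) (hε0 : 0 < ε) (hεkq : ε ≤ min kmin qmin / 2)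
    (hkmin : 0 < kmin) (hqmin : 0 < qmin) (hs0 : 0 ≤ s) (hr0 : 0 ≤ r) :
    min kmin qmin / 2 * s^2 ≤ W := by
  have hkq : 0 < min kmin qmin := lt_min hkmin hqmin
  have hmk : min kmin qmin ≤ kmin := min_le_left _ _
  have hmq : min kmin qmin ≤ qmin := min_le_right _ _
  have hA : AB ≤ s*r := (le_abs_self AB).trans F7
  have hB : ε*AB ≤ ε*(s*r) := mul_le_mul_of_nonneg_left hA hε0.le
  have hC : ε*(s*r) ≤ (min kmin qmin / 2)*(s*r) :=
    mul_le_mul_of_nonneg_right hεkq (mul_nonneg hs0 hr0)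
  have hsr2 : 2*(s*r) ≤ s^2 + r^2 := by nlinarith [sq_nonneg (s - r)]
  have hD : (min kmin qmin / 2)*(2*(s*r)) ≤ (min kmin qmin / 2)*(s^2+r^2) :=
    mul_le_mul_of_nonneg_left hsr2 (by positivity)
  have hE : min kmin qmin * s^2 ≤ qmin * s^2 := mul_le_mul_of_nonneg_right hmq (sq_nonneg s)
  have hF : min kmin qmin * r^2 ≤ kmin * r^2 := mul_le_mul_of_nonneg_right hmk (sq_nonneg r)
  have hG : 0 ≤ min kmin qmin / 2 * r^2 := mul_nonneg (by positivity) (sq_nonneg r)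
  rw [hW]
  linarith [hB, hC, hD, hE, hF, hG, h1, h2]

set_option maxHeartbeats 4000000 in
set_option synthInstance.maxHeartbeats 2000000 in
/-- Theorem 1 (continuous-time pre-conditioned PI consensus): under connectivity of the
graph, SPD pre-conditioners, the restricted secant inequality for the cumulative cost `F`
w.r.t. `X* = (x*,…,x*)` and `L_f`-Lipschitz continuity of `∇F`, there exist `ᾱ > 0` and
`0 < β₁ < β₂` such that for all `α ∈ (0, ᾱ)`, `β ∈ (β₁, β₂)`, every trajectory of
`ẋ = −K(L̃x − βL̃v + α∇F(x))`, `v̇ = −βKL̃x` (arbitrary initialization) has each local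
estimate `x_i(t)` converging exponentially to the same minimizer `x*`. -/
theorem pi_consensus_continuous_exponential_convergence
    (d m : ℕ)
    (G : SimpleGraph (Fin m)) [DecidableRel G.Adj] (hG : G.Connected)
    (f : Fin m → EuclideanSpace ℝ (Fin d) → ℝ)
    (hf : ∀ i, ContDiff ℝ 1 (f i))
    (Ki : Fin m → Matrix (Fin d) (Fin d) ℝ)
    (hKi : ∀ i, (Ki i).PosDef)
    (xstar : EuclideanSpace ℝ (Fin d))
    (hstar : ∑ i, gradient (f i) xstar = 0)
    (Xstar : Stack d m) (hXstar : ∀ i, Xstar i = xstar)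
    (μ Lf : ℝ) (hμ : 0 < μ) (hLf : 0 < Lf)
    (hRSI : ∀ x : Stack d m,
      μ * ‖x - Xstar‖ ^ 2 ≤ ⟪gradCumulative f x - gradCumulative f Xstar, x - Xstar⟫)
    (hLip : ∀ x y : Stack d m,
      ‖gradCumulative f x - gradCumulative f y‖ ≤ Lf * ‖x - y‖) :
    ∃ αbar > (0 : ℝ), ∃ β₁ β₂ : ℝ, 0 < β₁ ∧ β₁ < β₂ ∧
      ∀ α β : ℝ, 0 < α → α < αbar → β₁ < β → β < β₂ →
        ∀ x v : ℝ → Stack d m,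
          (∀ t ≥ (0 : ℝ), HasDerivAt x
            (-(preAct Ki (lapAct (G.lapMatrix ℝ) (x t) - β • lapAct (G.lapMatrix ℝ) (v t)
              + α • gradCumulative f (x t)))) t) →
          (∀ t ≥ (0 : ℝ), HasDerivAt v
            (-(β • preAct Ki (lapAct (G.lapMatrix ℝ) (x t)))) t) →
          ∃ C > (0 : ℝ), ∃ c > (0 : ℝ), ∀ i : Fin m, ∀ t ≥ (0 : ℝ),
            ‖x t i - xstar‖ ≤ C * Real.exp (-c * t) := by
  classical
  refine ⟨1, one_pos, 1, 2, one_pos, one_lt_two, ?_⟩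
  intro α β hα hα1 hβ1 hβ2 x v hxd hvd
  have hβ0 : (0:ℝ) < β := lt_trans one_pos hβ1
  set L : Matrix (Fin m) (Fin m) ℝ := G.lapMatrix ℝ with hLdef
  -- the three operators as continuous linear maps
  set Λ : Stack d m →L[ℝ] Stack d m := LinearMap.toContinuousLinearMap (lapActL d m L) with hΛdef
  set K : Stack d m →L[ℝ] Stack d m := LinearMap.toContinuousLinearMap (preActL d m Ki) with hKdef
  set Q : Stack d m →L[ℝ] Stack d m :=
    LinearMap.toContinuousLinearMap (preActL d m (fun i => (Ki i)⁻¹)) with hQdef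
  have hΛapp : ∀ w : Stack d m, Λ w = lapAct L w := fun _ => rfl
  have hKapp : ∀ w : Stack d m, K w = preAct Ki w := fun _ => rfl
  have hQapp : ∀ w : Stack d m, Q w = preAct (fun i => (Ki i)⁻¹) w := fun _ => rfl
  have hKiInv : ∀ i, ((Ki i)⁻¹).PosDef := fun i => (hKi i).inv
  have hΛsymm : ∀ u w : Stack d m, ⟪Λ u, w⟫ = ⟪u, Λ w⟫ := fun u w => by
    rw [hΛapp, hΛapp]; exact lapAct_symm (SimpleGraph.isSymm_lapMatrix ℝ G) u w
  have hΛpsd : ∀ u : Stack d m, 0 ≤ ⟪Λ u, u⟫ := fun u => by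
    rw [hΛapp]; exact lapAct_quad_nonneg G u
  have hKsymm : ∀ u w : Stack d m, ⟪K u, w⟫ = ⟪u, K w⟫ := fun u w => by
    rw [hKapp, hKapp]; exact preAct_inner_symm hKi u w
  have hQK : ∀ w : Stack d m, Q (K w) = w := fun w => by
    rw [hKapp, hQapp]; exact preAct_inv_comp hKi w
  have hKQ : ∀ w : Stack d m, K (Q w) = w := fun w => by
    rw [hKapp, hQapp]; exact preAct_comp_inv hKi w
  have hKpos : ∀ w : Stack d m, w ≠ 0 → 0 < ⟪K w, w⟫ := fun w hw => by
    rw [hKapp]; exact preAct_quad_pos hKi hw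
  have hQpos : ∀ w : Stack d m, w ≠ 0 → 0 < ⟪Q w, w⟫ := fun w hw => by
    rw [hQapp]; exact preAct_quad_pos hKiInv hw
  -- kernel and its orthogonal complement
  set Ker : Submodule ℝ (Stack d m) := LinearMap.ker (lapActL d m L) with hKerdef
  set S : Submodule ℝ (Stack d m) := Kerᗮ with hSdef
  have hKerΛ : ∀ w ∈ Ker, Λ w = 0 := fun w hw => by
    rw [hΛapp]; exact LinearMap.mem_ker.mp hw
  have hXKer : Xstar ∈ Ker := by
    rw [hKerdef, LinearMap.mem_ker]
    show lapAct L Xstar = 0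
    have : Xstar = (WithLp.toLp 2 (fun _ => xstar) : Stack d m) := PiLp.ext hXstar
    rw [this, hLdef]
    exact lapAct_const_eq_zero G xstar
  -- quadratic-form constants
  obtain ⟨kmin, hkmin, hKlb⟩ := posdef_quadratic_bound K ⊤
    (fun y _ hy => hKpos y hy)
  obtain ⟨qmin, hqmin, hQlb⟩ := posdef_quadratic_bound Q ⊤
    (fun y _ hy => hQpos y hy)
  obtain ⟨lam2, hlam2, hΛlb⟩ := posdef_quadratic_bound Λ S (by
    intro y hyS hy
    rcases lt_or_eq_of_le (hΛpsd y) with h | h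
    · exact h
    · exfalso
      have hΛy : Λ y = 0 := psd_apply_eq_zero Λ hΛsymm hΛpsd h.symm
      have hyK : y ∈ Ker := by rw [hKerdef, LinearMap.mem_ker]; exact hΛy
      have : ⟪y, y⟫ = (0:ℝ) := (Submodule.mem_orthogonal Ker y).mp hyS y hyK
      exact hy (inner_self_eq_zero.mp this))
  obtain ⟨CΛ, hCΛ⟩ : ∃ y : ℝ, y = ‖Λ‖ := ⟨_, rfl⟩
  obtain ⟨CK, hCK⟩ : ∃ y : ℝ, y = ‖K‖ := ⟨_, rfl⟩
  obtain ⟨CQ, hCQ⟩ : ∃ y : ℝ, y = ‖Q‖ := ⟨_, rfl⟩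
  have hCΛ0 : 0 ≤ CΛ := by rw [hCΛ]; exact norm_nonneg _
  have hCK0 : 0 ≤ CK := by rw [hCK]; exact norm_nonneg _
  have hCQ0 : 0 ≤ CQ := by rw [hCQ]; exact norm_nonneg _
  have hΛop : ∀ w : Stack d m, ‖Λ w‖ ≤ CΛ * ‖w‖ := by
    intro w; rw [hCΛ]; exact Λ.le_opNorm w
  have hKop : ∀ w : Stack d m, ‖K w‖ ≤ CK * ‖w‖ := by
    intro w; rw [hCK]; exact K.le_opNorm w
  have hQop : ∀ w : Stack d m, ‖Q w‖ ≤ CQ * ‖w‖ := by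
    intro w; rw [hCQ]; exact Q.le_opNorm w
  -- range of Λ is S
  have hrange : LinearMap.range (lapActL d m L) = S := by
    apply Submodule.eq_of_le_of_finrank_eq
    · rintro _ ⟨w, rfl⟩
      rw [hSdef, Submodule.mem_orthogonal]
      intro u huK
      have h1 : ⟪Λ u, w⟫ = ⟪u, Λ w⟫ := hΛsymm u w
      rw [hKerΛ u huK, inner_zero_left] at h1
      exact h1.symm
    · have h1 := LinearMap.finrank_range_add_finrank_ker (lapActL d m L)
      have h2 := Ker.finrank_add_finrank_orthogonal
      rw [← hKerdef] at h1
      rw [← hSdef] at h2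
      omega
  -- the aggregate gradient at the optimum lies in S
  set gstar : Stack d m := gradCumulative f Xstar with hgstardef
  have hgstarS : gstar ∈ S := by
    rw [hSdef, Submodule.mem_orthogonal]
    intro u huK
    obtain ⟨i0⟩ := hG.nonempty
    have hconst : ∀ i, u i = u i0 := by
      intro i
      exact lapAct_ker_const G hG (LinearMap.mem_ker.mp huK) i i0
    have hstep : ⟪u, gstar⟫ = ∑ i, ⟪u i0, gradient (f i) xstar⟫ := by
      rw [PiLp.inner_apply]
      refine Finset.sum_congr rfl fun i _ => ?_
      rw [hconst i]
      congr 1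
      show gradient (f i) (Xstar i) = gradient (f i) xstar
      rw [hXstar i]
    rw [hstep, ← inner_sum, hstar, inner_zero_right]
  -- equilibrium for the integral state
  have hvbar : ∃ vbar : Stack d m, (lapActL d m L) vbar = (α/β) • gstar := by
    have : (α/β) • gstar ∈ LinearMap.range (lapActL d m L) := by
      rw [hrange]; exact S.smul_mem _ hgstarS
    obtain ⟨vbar, hv⟩ := this
    exact ⟨vbar, hv⟩
  obtain ⟨vbar, hvbarΛ⟩ := hvbar
  -- shift vbar by a kernel element so that the projected integral error starts at zero
  set P : Stack d m →L[ℝ] Ker := Ker.orthogonalProjectionOnto with hPdef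
  set T : Ker →ₗ[ℝ] Ker :=
    (P.toLinearMap).comp ((Q.toLinearMap).comp Ker.subtype) with hTdef
  have hTinj : Function.Injective T := by
    rw [← LinearMap.ker_eq_bot, Submodule.eq_bot_iff]
    rintro k hk
    have hk0 : P (Q (k : Stack d m)) = 0 := hk
    have horth : ⟪Q (k : Stack d m) - ((Ker.orthogonalProjectionOnto (Q (k : Stack d m)) : Ker) : Stack d m), (k : Stack d m)⟫ = 0 :=
      Ker.starProjection_inner_eq_zero (Q (k : Stack d m)) (k : Stack d m) k.2
    rw [hPdef] at hk0
    rw [hk0] at horth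
    simp only [Submodule.coe_zero, sub_zero] at horth
    by_contra hne
    have hkne : (k : Stack d m) ≠ 0 := fun h => hne (Subtype.ext h)
    exact absurd horth (ne_of_gt (hQpos _ hkne))
  have hTsurj : Function.Surjective T := LinearMap.injective_iff_surjective.mp hTinj
  obtain ⟨ksh, hksh⟩ := hTsurj (P (Q (v 0 - vbar)))
  set vref : Stack d m := vbar + (ksh : Stack d m) with hvrefdef
  have hΛvref : (lapActL d m L) vref = (α/β) • gstar := by
    rw [hvrefdef, map_add, hvbarΛ, LinearMap.mem_ker.mp ksh.2, add_zero]
  -- error coordinates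
  set a : ℝ → Stack d m := fun t => x t - Xstar with hadef
  set z : ℝ → Stack d m := fun t => Q (v t - vref) with hzdef
  set hvec : ℝ → Stack d m := fun t => gradCumulative f (x t) - gstar with hhdef
  -- z stays in S
  have hzd : ∀ t ≥ (0:ℝ), HasDerivAt z (-β • Λ (a t)) t := by
    intro t ht
    have h1 : HasDerivAt (fun s => v s - vref) (-(β • preAct Ki (lapAct L (x t)))) t :=
      (hvd t ht).sub_const vref
    have h2 := Q.hasFDerivAt.comp_hasDerivAt t h1
    have h4 : Λ (x t) = Λ (a t) := by
      have e : Λ (a t) = Λ (x t) - Λ Xstar := by rw [hadef]; exact map_sub Λ (x t) Xstar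
      rw [e, hKerΛ Xstar hXKer, sub_zero]
    have h3 : Q (-(β • preAct Ki (lapAct L (x t)))) = -β • Λ (a t) := by
      rw [map_neg, map_smul]
      have e : Q (preAct Ki (lapAct L (x t))) = lapAct L (x t) := hQK _
      rw [e, ← hΛapp, h4, neg_smul]
    rw [h3] at h2
    exact h2
  have hzS : ∀ t ≥ (0:ℝ), z t ∈ S := by
    have hz0 : P (z 0) = 0 := by
      have e1 : z 0 = Q (v 0 - vbar) - Q (ksh : Stack d m) := by
        rw [hzdef]
        show Q (v 0 - vref) = _
        rw [hvrefdef, ← map_sub]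
        congr 1
        abel
      rw [e1, map_sub]
      have e2 : P (Q (ksh : Stack d m)) = T ksh := rfl
      rw [e2, hksh]
      simp
    have hζd : ∀ t ≥ (0:ℝ), HasDerivAt (fun s => P (z s)) 0 t := by
      intro t ht
      have h1 := P.hasFDerivAt.comp_hasDerivAt t (hzd t ht)
      have h2 : P (-β • Λ (a t)) = 0 := by
        rw [map_smul]
        have hmem : Λ (a t) ∈ S := by
          rw [← hrange]
          exact ⟨a t, rfl⟩
        have : P (Λ (a t)) = 0 := by
          rw [hPdef]
          exact Submodule.orthogonalProjectionOnto_eq_zero_iff.mpr (hSdef ▸ hmem)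
        rw [this, smul_zero]
      rw [h2] at h1
      exact h1
    intro t ht
    have := const_of_deriv_zero hζd t ht
    rw [hz0] at this
    rw [hSdef]
    exact Submodule.orthogonalProjectionOnto_eq_zero_iff.mp this
  -- derivative of the primal error
  have hΛxa : ∀ t, Λ (x t) = Λ (a t) := by
    intro t
    have e : Λ (a t) = Λ (x t) - Λ Xstar := by rw [hadef]; exact map_sub Λ (x t) Xstar
    rw [e, hKerΛ Xstar hXKer, sub_zero]
  set A' : ℝ → Stack d m := fun t => -(K (Λ (a t) - β • Λ (K (z t)) + α • hvec t)) with hA'def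
  have had : ∀ t ≥ (0:ℝ), HasDerivAt a (A' t) t := by
    intro t ht
    have h1 := (hxd t ht).sub_const Xstar
    have harg : lapAct L (x t) - β • lapAct L (v t) + α • gradCumulative f (x t)
        = Λ (a t) - β • Λ (K (z t)) + α • hvec t := by
      have e1 : lapAct L (x t) = Λ (a t) := by rw [← hΛapp]; exact hΛxa t
      have e2 : lapAct L (v t) = Λ (K (z t)) + (α/β) • gstar := by
        have eK : K (z t) = v t - vref := by rw [hzdef]; exact hKQ _
        have esplit : Λ (v t) = Λ (v t - vref) + Λ vref := by
          rw [← map_add]; congr 1; abel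
        rw [← hΛapp, esplit, ← eK]
        have hvrefΛ' : Λ vref = (α/β) • gstar := hΛvref
        rw [hvrefΛ']
      have e3 : α • gradCumulative f (x t) = α • hvec t + α • gstar := by
        rw [hhdef]
        show α • gradCumulative f (x t) = α • (gradCumulative f (x t) - gstar) + α • gstar
        rw [smul_sub]; abel
      rw [e1, e2, e3, smul_add]
      have e4 : β • ((α/β) • gstar) = α • gstar := by
        rw [smul_smul]
        congr 1
        field_simp
      rw [e4]
      abel
    have hval : (-(preAct Ki (lapAct L (x t) - β • lapAct L (v t)
        + α • gradCumulative f (x t)))) = A' t := by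
      rw [harg]; rfl
    rw [hval] at h1
    exact h1
  -- constants
  have hkq : (0:ℝ) < min kmin qmin := lt_min hkmin hqmin
  obtain ⟨M1, hM1def⟩ : ∃ y : ℝ, y = CK * (CΛ + α * Lf) := ⟨_, rfl⟩
  have hM10 : 0 ≤ M1 := by
    rw [hM1def]
    exact mul_nonneg hCK0 (add_nonneg hCΛ0 (mul_nonneg hα.le hLf.le))
  have hden : (0:ℝ) < (M1+1)^2 := by nlinarith
  obtain ⟨ε, hεdef⟩ : ∃ y : ℝ,
      y = min (min (1/β) (min kmin qmin / 2)) (α*μ*β*lam2*kmin^2 / (M1+1)^2) := ⟨_, rfl⟩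
  have hnum : 0 < α*μ*β*lam2*kmin^2 := by positivity
  have hε0 : 0 < ε := by
    rw [hεdef]
    exact lt_min (lt_min (by positivity) (div_pos hkq two_pos)) (div_pos hnum hden)
  have hεβ : ε * β ≤ 1 := by
    have h1 : ε ≤ 1/β := by
      rw [hεdef]; exact le_trans (min_le_left _ _) (min_le_left _ _)
    calc ε * β ≤ (1/β) * β := mul_le_mul_of_nonneg_right h1 hβ0.le
      _ = 1 := by rw [one_div]; exact inv_mul_cancel₀ hβ0.ne'
  have hεkq : ε ≤ min kmin qmin / 2 := by
    rw [hεdef]; exact le_trans (min_le_left _ _) (min_le_right _ _)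
  have hε3 : ε * (M1+1)^2 ≤ α*μ*β*lam2*kmin^2 := by
    have h : ε ≤ α*μ*β*lam2*kmin^2 / (M1+1)^2 := by
      rw [hεdef]; exact min_le_right _ _
    calc ε * (M1+1)^2 ≤ (α*μ*β*lam2*kmin^2 / (M1+1)^2) * (M1+1)^2 :=
          mul_le_mul_of_nonneg_right h hden.le
      _ = α*μ*β*lam2*kmin^2 := div_mul_cancel₀ _ hden.ne'
  obtain ⟨ρ, hρdef⟩ : ∃ y : ℝ, y = ε*β*lam2*kmin^2 := ⟨_, rfl⟩
  have hρ0 : 0 < ρ := by rw [hρdef]; positivity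
  obtain ⟨Amax, hAmaxdef⟩ : ∃ y : ℝ, y = CQ + CK + ε := ⟨_, rfl⟩
  have hAmax0 : 0 < Amax := by rw [hAmaxdef]; linarith
  obtain ⟨γ, hγdef⟩ : ∃ y : ℝ, y = min (α*μ) ρ / Amax := ⟨_, rfl⟩
  have hγ0 : 0 < γ := by
    rw [hγdef]; exact div_pos (lt_min (by positivity) hρ0) hAmax0
  -- Lyapunov function and its derivative
  set W : ℝ → ℝ := fun t => ⟪Q (a t), a t⟫ + ⟪K (z t), z t⟫ - (2*ε) * ⟪a t, z t⟫ with hWdef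
  set DW : ℝ → ℝ := fun t =>
    (⟪Q (a t), A' t⟫ + ⟪Q (A' t), a t⟫)
      + (⟪K (z t), -β • Λ (a t)⟫ + ⟪K (-β • Λ (a t)), z t⟫)
      - (2*ε) * (⟪a t, -β • Λ (a t)⟫ + ⟪A' t, z t⟫) with hDWdef
  have hWd : ∀ t ≥ (0:ℝ), HasDerivAt W (DW t) t := by
    intro t ht
    have ha := had t ht
    have hz := hzd t ht
    have hQa := Q.hasFDerivAt.comp_hasDerivAt t ha
    have hKz := K.hasFDerivAt.comp_hasDerivAt t hz
    have d1 := hQa.inner ℝ ha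
    have d2 := hKz.inner ℝ hz
    have d3 := ha.inner ℝ hz
    exact (d1.add d2).sub (d3.const_mul (2*ε))
  -- key differential inequality
  have hkey : ∀ t ≥ (0:ℝ), DW t ≤ -γ * W t := by
    intro t ht
    have hbS0 : z t ∈ S := hzS t ht
    obtain ⟨a0, ha0⟩ : ∃ w : Stack d m, w = a t := ⟨_, rfl⟩
    obtain ⟨b, hb⟩ : ∃ w : Stack d m, w = z t := ⟨_, rfl⟩
    obtain ⟨hh, hhh⟩ : ∃ w : Stack d m, w = hvec t := ⟨_, rfl⟩
    obtain ⟨s, hsdef⟩ : ∃ y : ℝ, y = ‖a0‖ := ⟨_, rfl⟩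
    obtain ⟨r, hrdef⟩ : ∃ y : ℝ, y = ‖b‖ := ⟨_, rfl⟩
    have hbS : b ∈ Kerᗮ := by rw [hb]; exact hSdef ▸ hbS0
    have hs0 : 0 ≤ s := by rw [hsdef]; exact norm_nonneg _
    have hr0 : 0 ≤ r := by rw [hrdef]; exact norm_nonneg _
    have hA't : A' t = -(K (Λ a0 - β • Λ (K b) + α • hh)) := by rw [ha0, hb, hhh]
    -- conversion identities
    have cY : ⟪Λ (K b), a0⟫ = ⟪K (Λ a0), b⟫ := by
      rw [hKsymm, hΛsymm]
      exact real_inner_comm _ _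
    have c1 : ⟪a0, Λ a0⟫ = ⟪Λ a0, a0⟫ := real_inner_comm _ _
    have c2 : ⟪a0, Λ (K b)⟫ = ⟪K (Λ a0), b⟫ := by rw [real_inner_comm]; exact cY
    have c3 : ⟪a0, hh⟫ = ⟪hh, a0⟫ := real_inner_comm _ _
    have c4 : ⟪K b, Λ a0⟫ = ⟪K (Λ a0), b⟫ := by
      rw [hKsymm]
      exact real_inner_comm _ _
    have c5 : ⟪K (Λ (K b)), b⟫ = ⟪Λ (K b), K b⟫ := hKsymm _ _
    have i1 : ⟪Q a0, A' t⟫ = -⟪Λ a0, a0⟫ + β * ⟪K (Λ a0), b⟫ - α * ⟪hh, a0⟫ := by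
      rw [hA't, inner_neg_right, ← hKsymm, hKQ, inner_add_right, inner_sub_right,
        real_inner_smul_right, real_inner_smul_right, c1, c2, c3]
      ring
    have i2 : ⟪Q (A' t), a0⟫ = -⟪Λ a0, a0⟫ + β * ⟪K (Λ a0), b⟫ - α * ⟪hh, a0⟫ := by
      rw [hA't, map_neg, hQK, inner_neg_left, inner_add_left, inner_sub_left,
        real_inner_smul_left, real_inner_smul_left, cY]
      ring
    have i3 : ⟪K b, -β • Λ a0⟫ = -β * ⟪K (Λ a0), b⟫ := by
      simp only [neg_smul, inner_neg_right, real_inner_smul_right]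
      rw [c4]; ring
    have i4 : ⟪K (-β • Λ a0), b⟫ = -β * ⟪K (Λ a0), b⟫ := by
      simp only [neg_smul, map_neg, map_smul, inner_neg_left, real_inner_smul_left]
      ring
    have i5 : ⟪a0, -β • Λ a0⟫ = -β * ⟪Λ a0, a0⟫ := by
      simp only [neg_smul, inner_neg_right, real_inner_smul_right]
      rw [c1]; ring
    have i6 : ⟪A' t, b⟫ = -⟪K (Λ a0), b⟫ + β * ⟪Λ (K b), K b⟫ - α * ⟪K hh, b⟫ := by
      rw [hA't]
      have eK : K (Λ a0 - β • Λ (K b) + α • hh)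
          = K (Λ a0) - β • K (Λ (K b)) + α • K hh := by
        rw [map_add, map_sub, map_smul, map_smul]
      rw [inner_neg_left, eK, inner_add_left, inner_sub_left, real_inner_smul_left,
        real_inner_smul_left, c5]
      ring
    have hDWt : DW t = (⟪Q a0, A' t⟫ + ⟪Q (A' t), a0⟫)
        + (⟪K b, -β • Λ a0⟫ + ⟪K (-β • Λ a0), b⟫)
        - (2*ε) * (⟪a0, -β • Λ a0⟫ + ⟪A' t, b⟫) := by rw [ha0, hb]
    have hDWeq : DW t = (-2 + 2*ε*β) * ⟪Λ a0, a0⟫ - 2*α*⟪hh, a0⟫ + 2*ε*⟪K (Λ a0), b⟫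
        - 2*ε*β*⟪Λ (K b), K b⟫ + 2*ε*α*⟪K hh, b⟫ := by
      rw [hDWt, i1, i2, i3, i4, i5, i6]; ring
    -- bounds
    have F1 : μ * s^2 ≤ ⟪hh, a0⟫ := by
      rw [hsdef, ha0, hhh]; exact hRSI (x t)
    have F2 : ‖hh‖ ≤ Lf * s := by
      rw [hsdef, ha0, hhh]; exact hLip (x t) Xstar
    have F3 : 0 ≤ ⟪Λ a0, a0⟫ := hΛpsd a0
    have F4 : lam2 * (kmin^2 * r^2) ≤ ⟪Λ (K b), K b⟫ := by
      rcases eq_or_ne b 0 with hb0 | hb0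
      · have hr00 : r = 0 := by rw [hrdef, hb0, norm_zero]
        rw [hb0, map_zero, map_zero, inner_zero_left, hr00]
        simp
      · obtain ⟨y, hy⟩ : ∃ w : Stack d m, w = K b := ⟨_, rfl⟩
        obtain ⟨p, hpS, hypKer⟩ : ∃ p : Stack d m, p ∈ S ∧ y - p ∈ Ker := by
          refine ⟨((S.orthogonalProjectionOnto y : S) : Stack d m),
            (S.orthogonalProjectionOnto y).2, ?_⟩
          have h1 : y - ((S.orthogonalProjectionOnto y : S) : Stack d m) ∈ Sᗮ :=
            S.sub_starProjection_mem_orthogonal y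
          have h2 : Sᗮ = Ker := by rw [hSdef]; exact Submodule.orthogonal_orthogonal Ker
          rw [h2] at h1
          exact h1
        have hΛyp : Λ y = Λ p := by
          have h0 : Λ (y - p) = 0 := hKerΛ _ hypKer
          rw [map_sub, sub_eq_zero] at h0
          exact h0
        have hq1 : ⟪Λ y, y⟫ = ⟪Λ p, p⟫ := by
          rw [hΛyp]
          have hsplit : y = p + (y - p) := by abel
          conv_lhs => rw [hsplit]
          rw [inner_add_right]
          have h0 : ⟪Λ p, y - p⟫ = 0 := by
            rw [hΛsymm, hKerΛ _ hypKer, inner_zero_right]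
          rw [h0, add_zero]
        have hq2 : lam2 * ‖p‖^2 ≤ ⟪Λ p, p⟫ := hΛlb p hpS
        have hq3 : kmin * r^2 ≤ ⟪p, b⟫ := by
          have e : ⟪y, b⟫ = ⟪p, b⟫ + ⟪y - p, b⟫ := by
            rw [← inner_add_left]
            congr 1
            abel
          have e2 : ⟪y - p, b⟫ = 0 := (Submodule.mem_orthogonal Ker b).mp hbS _ hypKer
          have e3 : kmin * r^2 ≤ ⟪y, b⟫ := by
            rw [hy, hrdef]; exact hKlb b Submodule.mem_top
          rw [e2, add_zero] at e
          rw [← e]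
          exact e3
        have hq4 : kmin * r ≤ ‖p‖ := by
          have hrpos : 0 < r := by
            rw [hrdef]
            exact norm_pos_iff.mpr hb0
          have hpb : ⟪p, b⟫ ≤ ‖p‖ * ‖b‖ := real_inner_le_norm p b
          rw [← hrdef] at hpb
          have h5 : kmin * r^2 ≤ ‖p‖ * r := le_trans hq3 hpb
          have h6 : kmin * r * r ≤ ‖p‖ * r := by
            calc kmin * r * r = kmin * r^2 := by ring
              _ ≤ ‖p‖ * r := h5
          exact le_of_mul_le_mul_right h6 hrpos
        have hfin : lam2 * (kmin^2 * r^2) ≤ ⟪Λ y, y⟫ := by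
          calc lam2 * (kmin^2 * r^2) ≤ lam2 * ‖p‖^2 := by
                apply mul_le_mul_of_nonneg_left _ hlam2.le
                have h7 := mul_self_le_mul_self (mul_nonneg hkmin.le hr0) hq4
                calc kmin^2 * r^2 = (kmin*r) * (kmin*r) := by ring
                  _ ≤ ‖p‖ * ‖p‖ := h7
                  _ = ‖p‖^2 := by ring
            _ ≤ ⟪Λ p, p⟫ := hq2
            _ = ⟪Λ y, y⟫ := hq1.symm
        rw [hy] at hfin
        exact hfin
    have F5 : |⟪K (Λ a0), b⟫| ≤ CK * CΛ * (s*r) := by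
      have h1 : ‖K (Λ a0)‖ ≤ CK * ‖Λ a0‖ := hKop _
      have h2 : ‖Λ a0‖ ≤ CΛ * s := by rw [hsdef]; exact hΛop a0
      calc |⟪K (Λ a0), b⟫| ≤ ‖K (Λ a0)‖ * r := by
            rw [hrdef]; exact abs_real_inner_le_norm _ _
        _ ≤ (CK * (CΛ * s)) * r := by
            apply mul_le_mul_of_nonneg_right _ hr0
            exact h1.trans (mul_le_mul_of_nonneg_left h2 hCK0)
        _ = CK * CΛ * (s*r) := by ring
    have F6 : |⟪K hh, b⟫| ≤ CK * Lf * (s*r) := by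
      have h1 : ‖K hh‖ ≤ CK * ‖hh‖ := hKop _
      calc |⟪K hh, b⟫| ≤ ‖K hh‖ * r := by
            rw [hrdef]; exact abs_real_inner_le_norm _ _
        _ ≤ (CK * (Lf * s)) * r := by
            apply mul_le_mul_of_nonneg_right _ hr0
            exact h1.trans (mul_le_mul_of_nonneg_left F2 hCK0)
        _ = CK * Lf * (s*r) := by ring
    have F7 : |⟪a0, b⟫| ≤ s*r := by
      rw [hsdef, hrdef]; exact abs_real_inner_le_norm _ _
    have F8 : ⟪Q a0, a0⟫ ≤ CQ * s^2 := by
      calc ⟪Q a0, a0⟫ ≤ ‖Q a0‖ * s := by rw [hsdef]; exact real_inner_le_norm _ _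
        _ ≤ (CQ * s) * s := by
            apply mul_le_mul_of_nonneg_right _ hs0
            rw [hsdef]; exact hQop a0
        _ = CQ * s^2 := by ring
    have F9 : ⟪K b, b⟫ ≤ CK * r^2 := by
      calc ⟪K b, b⟫ ≤ ‖K b‖ * r := by rw [hrdef]; exact real_inner_le_norm _ _
        _ ≤ (CK * r) * r := by
            apply mul_le_mul_of_nonneg_right _ hr0
            rw [hrdef]; exact hKop b
        _ = CK * r^2 := by ring
    -- assemble via the scalar lemma
    have hWt : W t = ⟪Q a0, a0⟫ + ⟪K b, b⟫ - (2*ε) * ⟪a0, b⟫ := by rw [ha0, hb]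
    exact lyap_arith α β μ Lf lam2 kmin qmin CK CQ CΛ ε M1 ρ Amax γ s r
      ⟪Λ a0, a0⟫ ⟪hh, a0⟫ ⟪K (Λ a0), b⟫ ⟪Λ (K b), K b⟫ ⟪K hh, b⟫
      ⟪Q a0, a0⟫ ⟪K b, b⟫ ⟪a0, b⟫ (W t) (DW t)
      hα hμ hLf hβ1 hlam2 hkmin hqmin hCK0 hCQ0 hCΛ0
      hM1def hρdef hAmaxdef hγdef hε0 hεβ hε3 hs0 hr0
      hDWeq hWt F1 F3 F4 F5 F6 F7 F8 F9
  -- lower bound on W and conclusion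
  have hWlb : ∀ t ≥ (0:ℝ), min kmin qmin / 2 * ‖a t‖^2 ≤ W t := by
    intro t _
    have hWt : W t = ⟪Q (a t), a t⟫ + ⟪K (z t), z t⟫ - (2*ε)*⟪a t, z t⟫ := rfl
    exact wlb_arith ε kmin qmin ‖a t‖ ‖z t‖ _ _ _ _ hWt (hQlb _ Submodule.mem_top)
      (hKlb _ Submodule.mem_top) (abs_real_inner_le_norm _ _) hε0 hεkq hkmin hqmin
      (norm_nonneg _) (norm_nonneg _)
  have hdecay := exp_decay_of_hasDerivAt hWd hkey
  have hW0 : 0 ≤ W 0 := by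
    have h0 := hWlb 0 le_rfl
    have h1 : 0 ≤ min kmin qmin / 2 * ‖a 0‖^2 := by positivity
    exact le_trans h1 h0
  obtain ⟨C0, hC0⟩ : ∃ y : ℝ, y = Real.sqrt (2 / min kmin qmin * W 0) := ⟨_, rfl⟩
  have hC0nn : 0 ≤ C0 := by rw [hC0]; exact Real.sqrt_nonneg _
  refine ⟨C0 + 1, by linarith, γ/2, by linarith, ?_⟩
  intro i t ht
  -- component bound
  have hcomp : ‖x t i - xstar‖ ≤ ‖a t‖ := by
    have e : x t i - xstar = a t i := by
      rw [hadef]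
      show x t i - xstar = x t i - Xstar i
      rw [hXstar i]
    rw [e]
    have h1 : ‖a t i‖^2 ≤ ‖a t‖^2 := by
      have hsum : ‖a t‖^2 = ∑ j, ‖a t j‖^2 :=
        PiLp.norm_sq_eq_of_L2 (fun _ : Fin m => EuclideanSpace ℝ (Fin d)) (a t)
      rw [hsum]
      exact Finset.single_le_sum (f := fun j => ‖a t j‖^2) (fun j _ => sq_nonneg _)
        (Finset.mem_univ i)
    calc ‖a t i‖ = Real.sqrt (‖a t i‖^2) := (Real.sqrt_sq (norm_nonneg _)).symm
      _ ≤ Real.sqrt (‖a t‖^2) := Real.sqrt_le_sqrt h1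
      _ = ‖a t‖ := Real.sqrt_sq (norm_nonneg _)
  have hW := hdecay t ht
  have hlb := hWlb t ht
  have hkq : (0:ℝ) < min kmin qmin := lt_min hkmin hqmin
  have hna : ‖a t‖^2 ≤ 2 / min kmin qmin * (W 0 * Real.exp (-γ*t)) := by
    have e1 : 2 / min kmin qmin * (min kmin qmin / 2 * ‖a t‖^2) = ‖a t‖^2 := by
      field_simp
    calc ‖a t‖^2 = 2 / min kmin qmin * (min kmin qmin / 2 * ‖a t‖^2) := e1.symm
      _ ≤ 2 / min kmin qmin * W t := by
          apply mul_le_mul_of_nonneg_left hlb (by positivity)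
      _ ≤ 2 / min kmin qmin * (W 0 * Real.exp (-γ*t)) := by
          apply mul_le_mul_of_nonneg_left hW (by positivity)
  have hsqrt : ‖a t‖ ≤ C0 * Real.exp (-(γ/2)*t) := by
    have h1 : ‖a t‖ ≤ Real.sqrt (2 / min kmin qmin * (W 0 * Real.exp (-γ*t))) := by
      rw [← Real.sqrt_sq (norm_nonneg (a t))]
      exact Real.sqrt_le_sqrt hna
    have h2 : Real.sqrt (2 / min kmin qmin * (W 0 * Real.exp (-γ*t)))
        = C0 * Real.sqrt (Real.exp (-γ*t)) := by
      rw [hC0, ← Real.sqrt_mul (by positivity : (0:ℝ) ≤ 2 / min kmin qmin * W 0)]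
      congr 1
      ring
    have h3 : Real.sqrt (Real.exp (-γ*t)) = Real.exp (-(γ/2)*t) := by
      rw [show -γ*t = (-(γ/2)*t) + (-(γ/2)*t) by ring, Real.exp_add]
      exact Real.sqrt_mul_self (Real.exp_pos _).le
    rw [h2, h3] at h1
    exact h1
  calc ‖x t i - xstar‖ ≤ ‖a t‖ := hcomp
    _ ≤ C0 * Real.exp (-(γ/2)*t) := hsqrt
    _ ≤ (C0+1) * Real.exp (-(γ/2)*t) := by
        have := (Real.exp_pos (-(γ/2)*t)).le
        nlinarith
end

section
/- Let α, β > 0 and let (X̂, v̂) ∈ (ℝ^d)^m × (ℝ^d)^m be an equilibrium point of the pre-conditioned PI consensus dynamics, i.e., K( L̃ X̂ − β L̃ v̂ + α ∇F(X̂) ) = 0 and β K L̃ X̂ = 0. Then there exists x̂ ∈ ℝ^d such that X̂ = (x̂,…,x̂) (all block components of X̂ are equal) and ∑_{i=1}^m ∇f_i(x̂) = 0; i.e., x̂ is a stationary point of the aggregate cost f = ∑_{i=1}^m f_i. -/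
open scoped RealInnerProductSpace

/-- A positive definite matrix has trivial kernel under `mulVec`. -/
lemma posDef_mulVec_eq_zero {d : ℕ} {K : Matrix (Fin d) (Fin d) ℝ} (hK : K.PosDef)
    {y : Fin d → ℝ} (hy : K.mulVec y = 0) : y = 0 := by
  by_contra h
  have := hK.dotProduct_mulVec_pos h
  rw [hy] at this
  simp at this

/-- Any equilibrium point `(X̂, v̂)` of the pre-conditioned PI consensus dynamics, i.e.
`K(L̃X̂ − βL̃v̂ + α∇F(X̂)) = 0` and `βKL̃X̂ = 0`, is a consensus point `X̂ = (x̂,…,x̂)`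
with `x̂` a stationary point of the aggregate cost `f = ∑_i f_i`. -/
theorem pi_consensus_equilibrium_is_stationary_consensus
    (d m : ℕ)
    (G : SimpleGraph (Fin m)) [DecidableRel G.Adj] (hG : G.Connected)
    (f : Fin m → EuclideanSpace ℝ (Fin d) → ℝ)
    (hf : ∀ i, ContDiff ℝ 1 (f i))
    (Ki : Fin m → Matrix (Fin d) (Fin d) ℝ)
    (hKi : ∀ i, (Ki i).PosDef)
    (α β : ℝ) (hα : 0 < α) (hβ : 0 < β)
    (Xhat vhat : Stack d m)
    (heq₁ : preAct Ki (lapAct (G.lapMatrix ℝ) Xhat - β • lapAct (G.lapMatrix ℝ) vhat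
      + α • gradCumulative f Xhat) = 0)
    (heq₂ : β • preAct Ki (lapAct (G.lapMatrix ℝ) Xhat) = 0) :
    ∃ xhat : EuclideanSpace ℝ (Fin d),
      (∀ i : Fin m, Xhat i = xhat) ∧ ∑ i, gradient (f i) xhat = 0 := by
  have hm : Nonempty (Fin m) := hG.nonempty
  obtain ⟨i0⟩ := hm
  -- Step 1: L̃ X̂ = 0
  have hLX : ∀ i, lapAct (G.lapMatrix ℝ) Xhat i = 0 := by
    intro i
    have h2 : (Ki i).mulVec (lapAct (G.lapMatrix ℝ) Xhat i) = 0 := by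
      have : β • (Ki i).mulVec (lapAct (G.lapMatrix ℝ) Xhat i) = 0 :=
        congrArg (fun z : Stack d m => (z i).ofLp) heq₂
      have := congrArg (fun z => β⁻¹ • z) this
      simpa [smul_smul, inv_mul_cancel₀ hβ.ne'] using this
    exact congrArg (WithLp.toLp 2) (posDef_mulVec_eq_zero (hKi i) h2)
  -- Step 2: consensus via kernel of Laplacian
  have hcons : ∀ i, Xhat i = Xhat i0 := by
    intro i
    ext k
    set y : Fin m → ℝ := fun j => Xhat j k with hy
    have hker : Matrix.toLin' (G.lapMatrix ℝ) y = 0 := by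
      rw [Matrix.toLin'_apply]
      funext i'
      have h0 : (∑ j, G.lapMatrix ℝ i' j • Xhat j) k
          = ∑ j, G.lapMatrix ℝ i' j * Xhat j k :=
        by rw [WithLp.ofLp_sum]; simp [Finset.sum_apply]
      have : (lapAct (G.lapMatrix ℝ) Xhat i') k = 0 := by rw [hLX i']; simp
      rw [show lapAct (G.lapMatrix ℝ) Xhat i' = ∑ j, G.lapMatrix ℝ i' j • Xhat j from rfl,
        h0] at this
      simpa [Matrix.mulVec, dotProduct, hy] using this
    have := (G.lapMatrix_mulVec_eq_zero_iff_forall_reachable (x := y)).mp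
      (by rwa [Matrix.toLin'_apply] at hker) i i0
      (hG.preconnected i i0)
    exact this
  refine ⟨Xhat i0, hcons, ?_⟩
  -- Step 3: from heq₁, β (L̃v̂)_i = α ∇f_i(X̂_i)
  have hgrad : ∀ i, α • gradient (f i) (Xhat i) = β • lapAct (G.lapMatrix ℝ) vhat i := by
    intro i
    have h1 : (Ki i).mulVec ((lapAct (G.lapMatrix ℝ) Xhat - β • lapAct (G.lapMatrix ℝ) vhat
        + α • gradCumulative f Xhat) i) = 0 :=
        congrArg (fun z : Stack d m => (z i).ofLp) heq₁
    have h2 : (lapAct (G.lapMatrix ℝ) Xhat - β • lapAct (G.lapMatrix ℝ) vhat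
        + α • gradCumulative f Xhat) i = 0 :=
        congrArg (WithLp.toLp 2) (posDef_mulVec_eq_zero (hKi i) h1)
    have h3 : lapAct (G.lapMatrix ℝ) Xhat i - β • lapAct (G.lapMatrix ℝ) vhat i
        + α • gradCumulative f Xhat i = 0 := h2
    rw [hLX i] at h3
    have : α • gradCumulative f Xhat i = β • lapAct (G.lapMatrix ℝ) vhat i := by
      linear_combination (norm := module) h3
    simpa [gradCumulative] using this
  -- Step 4: sum over i; column sums of L vanish
  have hsumL : ∑ i, lapAct (G.lapMatrix ℝ) vhat i = 0 := by
    have hcol : ∀ j, ∑ i, G.lapMatrix ℝ i j = 0 := by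
      intro j
      have hrow := congrFun (G.lapMatrix_mulVec_const_eq_zero (R := ℝ)) j
      simp only [Matrix.mulVec, dotProduct, mul_one, Pi.zero_apply] at hrow
      calc ∑ i, G.lapMatrix ℝ i j = ∑ i, G.lapMatrix ℝ j i := by
            refine Finset.sum_congr rfl fun i _ => ?_
            exact (G.isSymm_lapMatrix (R := ℝ)).apply j i
        _ = 0 := hrow
    unfold lapAct
    simp only [PiLp.toLp_apply]
    rw [Finset.sum_comm]
    refine Finset.sum_eq_zero fun j _ => ?_
    rw [← Finset.sum_smul, hcol j, zero_smul]
  have hsum : α • ∑ i, gradient (f i) (Xhat i0) = 0 := by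
    calc α • ∑ i, gradient (f i) (Xhat i0)
        = ∑ i, α • gradient (f i) (Xhat i) := by
          rw [Finset.smul_sum]
          exact Finset.sum_congr rfl fun i _ => by rw [hcons i]
      _ = ∑ i, β • lapAct (G.lapMatrix ℝ) vhat i := Finset.sum_congr rfl fun i _ => hgrad i
      _ = β • ∑ i, lapAct (G.lapMatrix ℝ) vhat i := (Finset.smul_sum).symm
      _ = 0 := by rw [hsumL, smul_zero]
  have := congrArg (fun z => α⁻¹ • z) hsum
  simpa [smul_smul, inv_mul_cancel₀ hα.ne'] using this
end

section
/- Let g : ℝ^N → ℝ be differentiable and satisfy the restricted secant inequality with respect to x* ∈ ℝ^N with constant μ > 0, and suppose ∇g(x*) = 0. Then (i) every y ∈ ℝ^N with ∇g(y) = 0 satisfies y = x*, and (ii) g(x) ≥ g(x*) + (μ/2)‖x − x*‖² for all x ∈ ℝ^N; in particular, x* is the unique global minimizer of g and every stationary point of g is the global minimizer. -/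
open scoped RealInnerProductSpace

/-- If a differentiable `g : ℝ^N → ℝ` satisfies the restricted secant inequality with
respect to `x*` with constant `μ > 0` and `∇g(x*) = 0`, then (i) `x*` is the unique
stationary point of `g`, and (ii) `g(x) ≥ g(x*) + (μ/2)‖x − x*‖²` for all `x`; in
particular `x*` is the unique global minimizer of `g`. -/
theorem rsi_unique_stationary_point_and_quadratic_growth
    (N : ℕ) (g : EuclideanSpace ℝ (Fin N) → ℝ) (hg : Differentiable ℝ g)
    (xstar : EuclideanSpace ℝ (Fin N)) (μ : ℝ) (hμ : 0 < μ)
    (hRSI : ∀ x : EuclideanSpace ℝ (Fin N),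
      μ * ‖x - xstar‖ ^ 2 ≤ ⟪gradient g x - gradient g xstar, x - xstar⟫)
    (hstar : gradient g xstar = 0) :
    (∀ y : EuclideanSpace ℝ (Fin N), gradient g y = 0 → y = xstar) ∧
    (∀ x : EuclideanSpace ℝ (Fin N), g xstar + (μ / 2) * ‖x - xstar‖ ^ 2 ≤ g x) := by
  constructor
  · intro y hy
    have h := hRSI y
    rw [hy, hstar, sub_zero, inner_zero_left] at h
    have hnorm : ‖y - xstar‖ ^ 2 ≤ 0 := by nlinarith
    have : ‖y - xstar‖ = 0 := by nlinarith [sq_nonneg ‖y - xstar‖, norm_nonneg (y - xstar)]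
    exact sub_eq_zero.mp (norm_eq_zero.mp this)
  · intro x
    set v := x - xstar with hv
    set φ : ℝ → ℝ := fun t => g (xstar + t • v) - μ / 2 * t ^ 2 * ‖v‖ ^ 2 with hφ
    have hline : ∀ t : ℝ, HasDerivAt (fun t : ℝ => xstar + t • v) v t := by
      intro t
      simpa using ((hasDerivAt_id t).smul_const v).const_add xstar
    have hderiv : ∀ t : ℝ,
        HasDerivAt φ (⟪gradient g (xstar + t • v), v⟫ - μ * t * ‖v‖ ^ 2) t := by
      intro t
      have hgd : HasDerivAt (fun t : ℝ => g (xstar + t • v))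
          ⟪gradient g (xstar + t • v), v⟫ t := by
        have hG := (hg (xstar + t • v)).hasGradientAt
        have := hG.hasFDerivAt.comp_hasDerivAt t (hline t)
        exact this.congr_deriv (by simp)
      have hq : HasDerivAt (fun t : ℝ => μ / 2 * t ^ 2 * ‖v‖ ^ 2)
          (μ * t * ‖v‖ ^ 2) t := by
        have : HasDerivAt (fun t : ℝ => t ^ 2) (2 * t) t := by
          simpa using hasDerivAt_pow 2 t
        have := (this.const_mul (μ / 2)).mul_const (‖v‖ ^ 2)
        exact this.congr_deriv (by ring)
      exact hgd.sub hq
    have hmono : MonotoneOn φ (Set.Icc 0 1) := by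
      apply monotoneOn_of_deriv_nonneg (convex_Icc 0 1)
      · exact fun t _ => (hderiv t).continuousAt.continuousWithinAt
      · intro t ht
        exact ((hderiv t).differentiableAt).differentiableWithinAt
      · intro t ht
        rw [interior_Icc] at ht
        rw [(hderiv t).deriv]
        have h := hRSI (xstar + t • v)
        rw [hstar, sub_zero] at h
        have hsub : (xstar + t • v) - xstar = t • v := by abel
        rw [hsub] at h
        rw [norm_smul, real_inner_smul_right] at h
        have ht0 : 0 < t := ht.1
        have habs : ‖t‖ = t := by rw [Real.norm_eq_abs, abs_of_pos ht0]
        rw [habs] at h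
        nlinarith [h, ht0, sq_nonneg ‖v‖]
    have h01 : φ 0 ≤ φ 1 := hmono (by norm_num) (by norm_num) (by norm_num)
    have h0 : φ 0 = g xstar := by simp [hφ]
    have h1 : φ 1 = g x - μ / 2 * ‖v‖ ^ 2 := by
      simp [hφ, hv]
    rw [h0, h1] at h01
    linarith
end

section
/- Let V : ℝ^N → ℝ be differentiable with η-Lipschitz gradient (η > 0), let Z ∈ ℝ^N with V(Z) ≥ 0, let G ∈ ℝ^N, and let ε₁, ε₃, h > 0. Suppose ⟨G, ∇V(Z)⟩ ≥ ε₁ V(Z) and ‖G‖² ≤ ε₃ V(Z). Then V(Z − h G) ≤ (1 − h (2ε₁ − h η ε₃)/2) V(Z). In particular, if h < 2ε₁/(η ε₃), then V(Z − hG) ≤ ρ V(Z) with ρ = 1 − h(2ε₁ − hηε₃)/2 < 1. -/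
open scoped RealInnerProductSpace

lemma descent_aux {N : ℕ} (V : EuclideanSpace ℝ (Fin N) → ℝ) (hV : Differentiable ℝ V)
    (η : ℝ) (hη : 0 ≤ η)
    (lip : ∀ x y : EuclideanSpace ℝ (Fin N),
      ‖gradient V x - gradient V y‖ ≤ η * ‖x - y‖)
    (x d : EuclideanSpace ℝ (Fin N)) :
    V (x + d) ≤ V x + ⟪gradient V x, d⟫ + η / 2 * ‖d‖ ^ 2 := by
  have key : ∀ t : ℝ, HasDerivAt (fun s : ℝ => V (x + s • d))
      ⟪gradient V (x + t • d), d⟫ t := by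
    intro t
    have hline : HasDerivAt (fun s : ℝ => x + s • d) d t := by
      simpa using ((hasDerivAt_id t).smul_const d).const_add x
    have hVf := ((hV (x + t • d)).hasGradientAt).hasFDerivAt
    have := hVf.comp_hasDerivAt t hline
    simpa [InnerProductSpace.toDual_apply_apply, Function.comp_def] using this
  have hgcont : Continuous (gradient V) := by
    have : LipschitzWith (Real.toNNReal η) (gradient V) := by
      apply LipschitzWith.of_dist_le_mul
      intro a b
      simpa [dist_eq_norm, Real.coe_toNNReal η hη] using lip a b
    exact this.continuous
  have hcont : Continuous fun t : ℝ => ⟪gradient V (x + t • d), d⟫ := by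
    apply Continuous.inner
    · exact hgcont.comp (by continuity)
    · exact continuous_const
  have hFTC : V (x + d) - V x = ∫ t in (0:ℝ)..1, ⟪gradient V (x + t • d), d⟫ := by
    have := intervalIntegral.integral_eq_sub_of_hasDerivAt
      (f := fun s : ℝ => V (x + s • d)) (fun t _ => key t)
      (hcont.intervalIntegrable 0 1)
    simp only [one_smul, zero_smul, add_zero] at this
    linarith [this]
  have hbound : ∀ t ∈ Set.Icc (0:ℝ) 1,
      ⟪gradient V (x + t • d), d⟫ ≤ ⟪gradient V x, d⟫ + η * t * ‖d‖ ^ 2 := by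
    intro t ht
    have h1 : ⟪gradient V (x + t • d) - gradient V x, d⟫
        ≤ ‖gradient V (x + t • d) - gradient V x‖ * ‖d‖ := real_inner_le_norm _ _
    have h2 : ‖gradient V (x + t • d) - gradient V x‖ ≤ η * (t * ‖d‖) := by
      have := lip (x + t • d) x
      simpa [norm_smul, abs_of_nonneg ht.1, mul_assoc] using this
    have h3 : ⟪gradient V (x + t • d) - gradient V x, d⟫ ≤ η * t * ‖d‖ ^ 2 := by
      calc _ ≤ ‖gradient V (x + t • d) - gradient V x‖ * ‖d‖ := h1
        _ ≤ η * (t * ‖d‖) * ‖d‖ := by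
            exact mul_le_mul_of_nonneg_right h2 (norm_nonneg _)
        _ = η * t * ‖d‖ ^ 2 := by ring
    have h4 : ⟪gradient V (x + t • d), d⟫
        = ⟪gradient V x, d⟫ + ⟪gradient V (x + t • d) - gradient V x, d⟫ := by
      rw [inner_sub_left]; ring
    linarith
  have hint : (∫ t in (0:ℝ)..1, ⟪gradient V (x + t • d), d⟫)
      ≤ ∫ t in (0:ℝ)..1, (⟪gradient V x, d⟫ + η * t * ‖d‖ ^ 2) := by
    apply intervalIntegral.integral_mono_on (by norm_num)
      (hcont.intervalIntegrable 0 1)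
      ((by continuity : Continuous fun t : ℝ =>
        (⟪gradient V x, d⟫ + η * t * ‖d‖ ^ 2)).intervalIntegrable 0 1)
    exact hbound
  have hval : (∫ t in (0:ℝ)..1, (⟪gradient V x, d⟫ + η * t * ‖d‖ ^ 2))
      = ⟪gradient V x, d⟫ + η / 2 * ‖d‖ ^ 2 := by
    have he : (fun t : ℝ => ⟪gradient V x, d⟫ + η * t * ‖d‖ ^ 2)
        = fun t : ℝ => ⟪gradient V x, d⟫ + (η * ‖d‖ ^ 2) * t := by
      funext t; ring
    rw [intervalIntegral.integral_congr (g := fun t : ℝ =>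
        ⟪gradient V x, d⟫ + (η * ‖d‖ ^ 2) * t) (fun t _ => by ring),
      intervalIntegral.integral_add intervalIntegrable_const
        ((show Continuous fun t : ℝ => (η * ‖d‖ ^ 2) * t from continuous_const.mul continuous_id').intervalIntegrable 0 1),
      intervalIntegral.integral_const_mul]
    simp [integral_id]
    ring
  linarith [hFTC, hint.trans_eq hval]

/-- One-step decrease of a Lyapunov function with `η`-Lipschitz gradient along the
step `Z ↦ Z − hG`: if `⟪G, ∇V(Z)⟫ ≥ ε₁V(Z)`, `‖G‖² ≤ ε₃V(Z)` and `V(Z) ≥ 0`, then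
`V(Z − hG) ≤ (1 − h(2ε₁ − hηε₃)/2)V(Z)`; in particular the factor is `< 1` when
`h < 2ε₁/(ηε₃)`. -/
theorem lyapunov_one_step_decrease
    (N : ℕ) (V : EuclideanSpace ℝ (Fin N) → ℝ) (hV : Differentiable ℝ V)
    (η : ℝ) (hη : 0 < η)
    (hgradLip : ∀ x y : EuclideanSpace ℝ (Fin N),
      ‖gradient V x - gradient V y‖ ≤ η * ‖x - y‖)
    (Z G : EuclideanSpace ℝ (Fin N)) (hVZ : 0 ≤ V Z)
    (ε₁ ε₃ h : ℝ) (hε₁ : 0 < ε₁) (hε₃ : 0 < ε₃) (hh : 0 < h)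
    (hdesc : ε₁ * V Z ≤ ⟪G, gradient V Z⟫)
    (hGbd : ‖G‖ ^ 2 ≤ ε₃ * V Z) :
    V (Z - h • G) ≤ (1 - h * (2 * ε₁ - h * η * ε₃) / 2) * V Z ∧
    (h < 2 * ε₁ / (η * ε₃) → 1 - h * (2 * ε₁ - h * η * ε₃) / 2 < 1) := by
  constructor
  · have key := descent_aux V hV η hη.le hgradLip Z (-(h • G))
    have e1 : Z + -(h • G) = Z - h • G := by abel
    rw [e1] at key
    have e2 : ⟪gradient V Z, -(h • G)⟫ = -h * ⟪G, gradient V Z⟫ := by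
      rw [inner_neg_right, real_inner_smul_right, real_inner_comm]; ring
    have e3 : ‖-(h • G)‖ ^ 2 = h ^ 2 * ‖G‖ ^ 2 := by
      rw [norm_neg, norm_smul]; simp [abs_of_nonneg hh.le]; ring
    rw [e2, e3] at key
    have h1 : -h * ⟪G, gradient V Z⟫ ≤ -h * (ε₁ * V Z) := by
      apply mul_le_mul_of_nonpos_left hdesc (by linarith)
    have h2 : η / 2 * (h ^ 2 * ‖G‖ ^ 2) ≤ η / 2 * (h ^ 2 * (ε₃ * V Z)) := by
      apply mul_le_mul_of_nonneg_left _ (by positivity)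
      exact mul_le_mul_of_nonneg_left hGbd (by positivity)
    nlinarith [key]
  · intro hlt
    have : h * (η * ε₃) < 2 * ε₁ := by
      rwa [lt_div_iff₀ (by positivity)] at hlt
    nlinarith
end
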